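/- Let L1 and L2 be Lie algebras over Z_p, each finitely generated free as a Z_p-module, such that for i = 1,2 the kernel of the bracket map ⋀² L_i → L_i is generated as a Z_p-module by decomposable elements x∧y with [x,y]=0. Then the product Lie algebra L0 = L1 ⊕ L2 also has the property that the kernel of its bracket map ⋀² L0 → L0 is generated by decomposable elements x∧y with [x,y]=0. -/

import Mathlib

open ExteriorAlgebra

/-- The wedge `x ∧ y` as an element of the exterior square `⋀[R]^2 M`. -/
noncomputable def wedge2 (R : Type*) {M : Type*} [CommRing R] [AddCommGroup M] [Module R M]
    (x y : M) : ⋀[R]^2 M :=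
  ⟨ExteriorAlgebra.ιMulti R 2 ![x, y],
    ExteriorAlgebra.ιMulti_range R 2 (Set.mem_range_self _)⟩

/-- The submodule `⋀L ⊆ ⋀²L` generated by the decomposable elements `x∧y` with `⁅x,y⁆ = 0`. -/
noncomputable def wedgeDecomp (R L : Type*) [CommRing R] [LieRing L] [LieAlgebra R L] :
    Submodule R (⋀[R]^2 L) :=
  Submodule.span R {w | ∃ x y : L, ⁅x, y⁆ = 0 ∧ w = wedge2 R x y}

/-- The product of two Lie rings, with componentwise bracket. -/
instance prodLieRing (L₁ L₂ : Type*) [LieRing L₁] [LieRing L₂] : LieRing (L₁ × L₂) where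
  bracket x y := (⁅x.1, y.1⁆, ⁅x.2, y.2⁆)
  add_lie x y z := by ext <;> simp [add_lie]
  lie_add x y z := by ext <;> simp [lie_add]
  lie_self x := by ext <;> simp
  leibniz_lie x y z := by ext <;> simp

instance prodLieAlgebra (R L₁ L₂ : Type*) [CommRing R] [LieRing L₁] [LieRing L₂]
    [LieAlgebra R L₁] [LieAlgebra R L₂] : LieAlgebra R (L₁ × L₂) where
  lie_smul t x y := Prod.ext (lie_smul t x.1 y.1) (lie_smul t x.2 y.2)


section Aux

variable {R M N : Type*} [CommRing R] [AddCommGroup M] [Module R M] [AddCommGroup N] [Module R N]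

lemma wedge2_val (x y : M) : (wedge2 R x y : ExteriorAlgebra R M) = ι R x * ι R y := by
  show ιMulti R 2 ![x, y] = _
  rw [ιMulti_apply]
  simp [List.ofFn_succ]

lemma mem_span_wedge2 (w : ⋀[R]^2 M) :
    w ∈ Submodule.span R {w : ⋀[R]^2 M | ∃ x y : M, w = wedge2 R x y} := by
  obtain ⟨v, hv⟩ := w
  have key : ∀ v, v ∈ Submodule.span R (Set.range (ιMulti R 2 (M := M))) →
      ∀ hv : v ∈ ⋀[R]^2 M,
      (⟨v, hv⟩ : ⋀[R]^2 M) ∈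
        Submodule.span R {w : ⋀[R]^2 M | ∃ x y : M, w = wedge2 R x y} := by
    intro v hv2
    induction hv2 using Submodule.span_induction with
    | mem z hz =>
        intro hv
        obtain ⟨f, rfl⟩ := hz
        have : (⟨ιMulti R 2 f, hv⟩ : ⋀[R]^2 M) = wedge2 R (f 0) (f 1) := by
          apply Subtype.ext
          show ιMulti R 2 f = ιMulti R 2 ![f 0, f 1]
          congr 1
          funext i; fin_cases i <;> rfl
        rw [this]
        exact Submodule.subset_span ⟨f 0, f 1, rfl⟩
    | zero => intro hv; exact Submodule.zero_mem _
    | add x y hx hy ihx ihy =>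
        intro hv
        rw [ιMulti_span_fixedDegree] at hx hy
        exact Submodule.add_mem _ (ihx hx) (ihy hy)
    | smul c x hx ihx =>
        intro hv
        rw [ιMulti_span_fixedDegree] at hx
        exact Submodule.smul_mem _ c (ihx hx)
  exact key v (by rwa [ιMulti_span_fixedDegree]) hv

lemma map_mem_pow2 (f : M →ₗ[R] N) {v : ExteriorAlgebra R M} (hv : v ∈ ⋀[R]^2 M) :
    ExteriorAlgebra.map f v ∈ ⋀[R]^2 N := by
  rw [← ιMulti_span_fixedDegree] at hv ⊢
  have : ExteriorAlgebra.map f v ∈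
      Submodule.map (ExteriorAlgebra.map f).toLinearMap
        (Submodule.span R (Set.range (ιMulti R 2))) := ⟨v, hv, rfl⟩
  rw [Submodule.map_span] at this
  refine Submodule.span_mono ?_ this
  rintro _ ⟨_, ⟨g, rfl⟩, rfl⟩
  exact ⟨f ∘ g, (map_apply_ιMulti f g).symm⟩

noncomputable def pow2Map (f : M →ₗ[R] N) : (⋀[R]^2 M) →ₗ[R] (⋀[R]^2 N) :=
  LinearMap.restrict (ExteriorAlgebra.map f).toLinearMap
    (fun _ hv => map_mem_pow2 f hv)

lemma pow2Map_wedge2 (f : M →ₗ[R] N) (x y : M) :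
    pow2Map f (wedge2 R x y) = wedge2 R (f x) (f y) := by
  apply Subtype.ext
  show ExteriorAlgebra.map f (wedge2 R x y : ExteriorAlgebra R M) = _
  rw [wedge2_val, wedge2_val, map_mul, map_apply_ι, map_apply_ι]

section Main

variable {L₁ L₂ : Type*} [LieRing L₁] [LieRing L₂] [LieAlgebra R L₁] [LieAlgebra R L₂]

lemma prod_bracket (a b : L₁ × L₂) : ⁅a, b⁆ = (⁅a.1, b.1⁆, ⁅a.2, b.2⁆) := rfl

set_option maxHeartbeats 1600000 in
theorem auxMain
    (β₁ : (⋀[R]^2 L₁) →ₗ[R] L₁) (hβ₁ : ∀ x y : L₁, β₁ (wedge2 R x y) = ⁅x, y⁆)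
    (β₂ : (⋀[R]^2 L₂) →ₗ[R] L₂) (hβ₂ : ∀ x y : L₂, β₂ (wedge2 R x y) = ⁅x, y⁆)
    (h₁ : LinearMap.ker β₁ = wedgeDecomp R L₁)
    (h₂ : LinearMap.ker β₂ = wedgeDecomp R L₂)
    (β₀ : (⋀[R]^2 (L₁ × L₂)) →ₗ[R] (L₁ × L₂))
    (hβ₀ : ∀ x y : L₁ × L₂, β₀ (wedge2 R x y) = ⁅x, y⁆) :
    LinearMap.ker β₀ = wedgeDecomp R (L₁ × L₂) := by
  set φ₁ : (⋀[R]^2 L₁) →ₗ[R] (⋀[R]^2 (L₁ × L₂)) := pow2Map (LinearMap.inl R L₁ L₂) with hφ₁def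
  set φ₂ : (⋀[R]^2 L₂) →ₗ[R] (⋀[R]^2 (L₁ × L₂)) := pow2Map (LinearMap.inr R L₁ L₂) with hφ₂def
  set π₁ : (⋀[R]^2 (L₁ × L₂)) →ₗ[R] (⋀[R]^2 L₁) := pow2Map (LinearMap.fst R L₁ L₂) with hπ₁def
  set π₂ : (⋀[R]^2 (L₁ × L₂)) →ₗ[R] (⋀[R]^2 L₂) := pow2Map (LinearMap.snd R L₁ L₂) with hπ₂def
  set Mixed : Submodule R (⋀[R]^2 (L₁ × L₂)) :=
    Submodule.span R {w | ∃ x y, w = wedge2 R ((x, 0) : L₁ × L₂) ((0, y) : L₁ × L₂)}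
    with hMdef
  -- the decomposables are in the kernel
  have hW : wedgeDecomp R (L₁ × L₂) ≤ LinearMap.ker β₀ := by
    rw [wedgeDecomp, Submodule.span_le]
    rintro w ⟨x, y, hxy, rfl⟩
    simp [LinearMap.mem_ker, hβ₀, hxy]
  -- mixed wedges are decomposable with zero bracket
  have hMW : Mixed ≤ wedgeDecomp R (L₁ × L₂) := by
    rw [hMdef, Submodule.span_le]
    rintro w ⟨x, y, rfl⟩
    exact Submodule.subset_span ⟨(x, 0), (0, y), by ext <;> simp [prod_bracket], rfl⟩
  -- φ maps decomposables to decomposables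
  have hφ₁W : ∀ a ∈ wedgeDecomp R L₁, φ₁ a ∈ wedgeDecomp R (L₁ × L₂) := by
    intro a ha
    induction ha using Submodule.span_induction with
    | mem z hz =>
        obtain ⟨x, y, hxy, rfl⟩ := hz
        rw [hφ₁def, pow2Map_wedge2]
        exact Submodule.subset_span
          ⟨_, _, by ext <;> simp [prod_bracket, hxy], rfl⟩
    | zero => simp
    | add x y _ _ ihx ihy => rw [map_add]; exact Submodule.add_mem _ ihx ihy
    | smul c x _ ihx => rw [map_smul]; exact Submodule.smul_mem _ c ihx
  have hφ₂W : ∀ a ∈ wedgeDecomp R L₂, φ₂ a ∈ wedgeDecomp R (L₁ × L₂) := by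
    intro a ha
    induction ha using Submodule.span_induction with
    | mem z hz =>
        obtain ⟨x, y, hxy, rfl⟩ := hz
        rw [hφ₂def, pow2Map_wedge2]
        exact Submodule.subset_span
          ⟨_, _, by ext <;> simp [prod_bracket, hxy], rfl⟩
    | zero => simp
    | add x y _ _ ihx ihy => rw [map_add]; exact Submodule.add_mem _ ihx ihy
    | smul c x _ ihx => rw [map_smul]; exact Submodule.smul_mem _ c ihx
  -- β₀ on the images of φ₁, φ₂
  have hβφ₁ : ∀ a, β₀ (φ₁ a) = ((β₁ a, 0) : L₁ × L₂) := by
    intro a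
    induction mem_span_wedge2 a using Submodule.span_induction with
    | mem z hz =>
        obtain ⟨x, y, rfl⟩ := hz
        rw [hφ₁def, pow2Map_wedge2, hβ₀, hβ₁, prod_bracket]
        simp
    | zero => simp; rfl
    | add x y _ _ ihx ihy => simp [map_add, ihx, ihy, Prod.ext_iff]
    | smul c x _ ihx => simp [map_smul, ihx, Prod.ext_iff]
  have hβφ₂ : ∀ a, β₀ (φ₂ a) = ((0, β₂ a) : L₁ × L₂) := by
    intro a
    induction mem_span_wedge2 a using Submodule.span_induction with
    | mem z hz =>
        obtain ⟨x, y, rfl⟩ := hz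
        rw [hφ₂def, pow2Map_wedge2, hβ₀, hβ₂, prod_bracket]
        simp
    | zero => simp; rfl
    | add x y _ _ ihx ihy => simp [map_add, ihx, ihy, Prod.ext_iff]
    | smul c x _ ihx => simp [map_smul, ihx, Prod.ext_iff]
  -- the decomposition: w - φ₁ (π₁ w) - φ₂ (π₂ w) is mixed
  have hdecomp : ∀ w : ⋀[R]^2 (L₁ × L₂), w - φ₁ (π₁ w) - φ₂ (π₂ w) ∈ Mixed := by
    intro w
    induction mem_span_wedge2 w using Submodule.span_induction with
    | mem z hz =>
        obtain ⟨u, v, rfl⟩ := hz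
        rw [hπ₁def, hπ₂def, hφ₁def, hφ₂def, pow2Map_wedge2, pow2Map_wedge2,
          pow2Map_wedge2, pow2Map_wedge2]
        have key : wedge2 R u v - wedge2 R ((u.1, 0) : L₁ × L₂) ((v.1, 0) : L₁ × L₂)
            - wedge2 R ((0, u.2) : L₁ × L₂) ((0, v.2) : L₁ × L₂)
            = wedge2 R ((u.1, 0) : L₁ × L₂) ((0, v.2) : L₁ × L₂)
            - wedge2 R ((v.1, 0) : L₁ × L₂) ((0, u.2) : L₁ × L₂) := by
          apply Subtype.ext
          have expand : ∀ z : L₁ × L₂,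
              ι R z = ι R ((z.1, 0) : L₁ × L₂) + ι R ((0, z.2) : L₁ × L₂) := by
            intro z; rw [← map_add]; congr 1; ext <;> simp
          push_cast [wedge2_val]
          rw [expand u, expand v]
          have h := ι_add_mul_swap (R := R) ((0, u.2) : L₁ × L₂) ((v.1, 0) : L₁ × L₂)
          have hbc : ι R ((0, u.2) : L₁ × L₂) * ι R ((v.1, 0) : L₁ × L₂)
              = -(ι R ((v.1, 0) : L₁ × L₂) * ι R ((0, u.2) : L₁ × L₂)) :=
            eq_neg_of_add_eq_zero_left h
          rw [add_mul, mul_add, mul_add, hbc]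
          abel
        simp only [LinearMap.inl_apply, LinearMap.inr_apply, LinearMap.fst_apply,
          LinearMap.snd_apply]
        rw [key]
        exact Submodule.sub_mem _
          (Submodule.subset_span ⟨u.1, v.2, rfl⟩)
          (Submodule.subset_span ⟨v.1, u.2, rfl⟩)
    | zero => simp
    | add x y _ _ ihx ihy =>
        have heq : (x + y) - φ₁ (π₁ (x + y)) - φ₂ (π₂ (x + y))
            = (x - φ₁ (π₁ x) - φ₂ (π₂ x)) + (y - φ₁ (π₁ y) - φ₂ (π₂ y)) := by
          simp only [map_add]; abel
        rw [heq]; exact Submodule.add_mem _ ihx ihy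
    | smul c x _ ihx =>
        have heq : (c • x) - φ₁ (π₁ (c • x)) - φ₂ (π₂ (c • x))
            = c • (x - φ₁ (π₁ x) - φ₂ (π₂ x)) := by
          simp only [map_smul, smul_sub]
        rw [heq]; exact Submodule.smul_mem _ c ihx
  -- conclude
  apply le_antisymm _ hW
  intro w hw
  have hm := hdecomp w
  have hβm : β₀ (w - φ₁ (π₁ w) - φ₂ (π₂ w)) = 0 := hW (hMW hm)
  have hβw : β₀ w = 0 := hw
  rw [map_sub, map_sub, hβw, hβφ₁, hβφ₂] at hβm
  have ha : β₁ (π₁ w) = 0 := by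
    have := congrArg Prod.fst hβm
    simpa using this
  have hb : β₂ (π₂ w) = 0 := by
    have := congrArg Prod.snd hβm
    simpa using this
  have hsplit : w = φ₁ (π₁ w) + φ₂ (π₂ w) + (w - φ₁ (π₁ w) - φ₂ (π₂ w)) := by abel
  rw [hsplit]
  exact Submodule.add_mem _
    (Submodule.add_mem _ (hφ₁W _ (h₁ ▸ ha)) (hφ₂W _ (h₂ ▸ hb)))
    (hMW hm)

end Main

end Aux


/-- Let `L₁` and `L₂` be Lie algebras over `ℤ_p`, each finitely generated free as a
`ℤ_p`-module, such that for `i = 1,2` the kernel of the bracket map `⋀² Lᵢ → Lᵢ` is generated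
as a `ℤ_p`-module by decomposable elements `x∧y` with `⁅x,y⁆ = 0`.  Then the product Lie
algebra `L₀ = L₁ ⊕ L₂` (with componentwise bracket) has the same property. -/
theorem stmt1 (p : ℕ) [Fact p.Prime]
    (L₁ L₂ : Type*) [LieRing L₁] [LieRing L₂] [LieAlgebra ℤ_[p] L₁] [LieAlgebra ℤ_[p] L₂]
    [Module.Free ℤ_[p] L₁] [Module.Finite ℤ_[p] L₁]
    [Module.Free ℤ_[p] L₂] [Module.Finite ℤ_[p] L₂]
    (β₁ : (⋀[ℤ_[p]]^2 L₁) →ₗ[ℤ_[p]] L₁) (hβ₁ : ∀ x y : L₁, β₁ (wedge2 ℤ_[p] x y) = ⁅x, y⁆)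
    (β₂ : (⋀[ℤ_[p]]^2 L₂) →ₗ[ℤ_[p]] L₂) (hβ₂ : ∀ x y : L₂, β₂ (wedge2 ℤ_[p] x y) = ⁅x, y⁆)
    (h₁ : LinearMap.ker β₁ = wedgeDecomp ℤ_[p] L₁)
    (h₂ : LinearMap.ker β₂ = wedgeDecomp ℤ_[p] L₂)
    (β₀ : (⋀[ℤ_[p]]^2 (L₁ × L₂)) →ₗ[ℤ_[p]] (L₁ × L₂))
    (hβ₀ : ∀ x y : L₁ × L₂, β₀ (wedge2 ℤ_[p] x y) = ⁅x, y⁆) :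
    LinearMap.ker β₀ = wedgeDecomp ℤ_[p] (L₁ × L₂) :=
  auxMain β₁ hβ₁ β₂ hβ₂ h₁ h₂ β₀ hβ₀
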